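/- Every connected simple graph with at least three vertices admits a total weighting with vertex weights in {1,2} and edge weights in {1,2,3} such that for every edge uv, the sum of the weight of u and the weights of the edges incident to u differs from the sum of the weight of v and the weights of the edges incident to v. -/

import Mathlib

open Finset

section Kalkowski

variable {V : Type*} [Fintype V] [DecidableEq V]

/-- The total sum at a vertex. -/
def totS (G : SimpleGraph V) [DecidableRel G.Adj] (f : V → ℕ) (w : Sym2 V → ℕ) (v : V) : ℕ :=
  f v + ∑ u ∈ G.neighborFinset v, w s(v, u)

/-- The invariant maintained by Kalkowski's algorithm on a processed set `A`. -/
def GoodW (G : SimpleGraph V) [DecidableRel G.Adj] (A : Finset V) (f : V → ℕ)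
    (w : Sym2 V → ℕ) : Prop :=
  (∀ v ∈ A, f v = 1 ∨ f v = 2) ∧
  (∀ e, w e = 1 ∨ w e = 2 ∨ w e = 3) ∧
  (∀ u v : V, u ∉ A → w s(u, v) = 2) ∧
  (∀ u ∈ A, ∀ v ∈ A, G.Adj u v → totS G f w u ≠ totS G f w v)

/-- Choice lemma: with a free summand `a ∈ {1,2}` and, for each element of `F`, the
choice of contributing `2` or a prescribed value in `{1,3}`, we can realize `F.card + 2`
consecutive values, hence avoid any forbidden set of at most `F.card` values. -/
lemma kalkowski_choice (F : Finset V) (k : V → ℕ) (hk : ∀ u ∈ F, k u = 1 ∨ k u = 3)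
    (B : Finset ℕ) (hB : B.card ≤ F.card) (C : ℕ) :
    ∃ a, (a = 1 ∨ a = 2) ∧ ∃ T, T ⊆ F ∧
      a + C + ((∑ u ∈ T, k u) + 2 * (F.card - T.card)) ∉ B := by
  classical
  set P := F.filter (fun u => k u = 3) with hP
  have hPF : P ⊆ F := filter_subset _ _
  set Q := F \ P with hQ
  have hQF : Q ⊆ F := sdiff_subset
  have hQ1 : ∀ u ∈ Q, k u = 1 := by
    intro u hu
    have huF : u ∈ F := hQF hu
    rcases hk u huF with h | h
    · exact h
    · exact absurd (mem_filter.2 ⟨huF, h⟩) (mem_sdiff.1 hu).2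
  have hP3 : ∀ u ∈ P, k u = 3 := fun u hu => (mem_filter.1 hu).2
  have hcard : Q.card + P.card = F.card := card_sdiff_add_card_eq_card hPF
  have hfind : ∃ r < F.card + 2, C + 2 * P.card + Q.card + 1 + r ∉ B := by
    by_contra hcon
    push_neg at hcon
    have hsub : (range (F.card + 2)).image (fun r => C + 2 * P.card + Q.card + 1 + r) ⊆ B := by
      intro b hb
      obtain ⟨r, hr, rfl⟩ := mem_image.1 hb
      exact hcon r (mem_range.1 hr)
    have hinj : ((range (F.card + 2)).image
        (fun r => C + 2 * P.card + Q.card + 1 + r)).card = F.card + 2 := by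
      rw [card_image_of_injective _ (fun a b h => by omega), card_range]
    have := card_le_card hsub
    omega
  obtain ⟨r, hr, hmem⟩ := hfind
  by_cases hrq : r ≤ Q.card
  · obtain ⟨T, hTQ, hTcard⟩ := exists_subset_card_eq (s := Q) (n := Q.card - r) (by omega)
    refine ⟨1, Or.inl rfl, T, hTQ.trans hQF, ?_⟩
    have hsum : (∑ u ∈ T, k u) = Q.card - r := by
      rw [Finset.sum_congr rfl (fun u hu => hQ1 u (hTQ hu)), Finset.sum_const, hTcard,
        smul_eq_mul, mul_one]
    rw [hsum, hTcard]
    have heq : 1 + C + ((Q.card - r) + 2 * (F.card - (Q.card - r)))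
        = C + 2 * P.card + Q.card + 1 + r := by omega
    rw [heq]; exact hmem
  · obtain ⟨T, hTP, hTcard⟩ := exists_subset_card_eq (s := P) (n := r - Q.card - 1) (by omega)
    refine ⟨2, Or.inr rfl, T, hTP.trans hPF, ?_⟩
    have hsum : (∑ u ∈ T, k u) = 3 * (r - Q.card - 1) := by
      rw [Finset.sum_congr rfl (fun u hu => hP3 u (hTP hu)), Finset.sum_const, hTcard,
        smul_eq_mul, mul_comm]
    rw [hsum, hTcard]
    have heq : 2 + C + (3 * (r - Q.card - 1) + 2 * (F.card - (r - Q.card - 1)))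
        = C + 2 * P.card + Q.card + 1 + r := by omega
    rw [heq]; exact hmem

/-- The extension step of Kalkowski's algorithm. -/
lemma kalkowski_step (G : SimpleGraph V) [DecidableRel G.Adj] (A : Finset V) (x : V)
    (hx : x ∉ A) (f : V → ℕ) (w : Sym2 V → ℕ) (h : GoodW G A f w) :
    ∃ f' w', GoodW G (insert x A) f' w' := by
  classical
  obtain ⟨hf, hw, hout, hadj⟩ := h
  set k : V → ℕ := fun j => if f j = 1 then 1 else 3 with hk
  set F : Finset V := G.neighborFinset x ∩ A with hF
  set B : Finset ℕ := F.image (totS G f w) with hB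
  obtain ⟨a, ha, T, hTF, ht⟩ := kalkowski_choice F k
    (fun u _ => by by_cases h1 : f u = 1 <;> simp [hk, h1])
    B card_image_le (2 * ((G.neighborFinset x).card - F.card))
  have hTA : T ⊆ A := hTF.trans inter_subset_right
  have hTN : T ⊆ G.neighborFinset x := hTF.trans inter_subset_left
  have hxT : x ∉ T := fun hc => hx (hTA hc)
  have hsymm : ∀ u v : V, (if u = x then k v else if v = x then k u else 2)
      = (if v = x then k u else if u = x then k v else 2) := by
    intro u v
    by_cases h1 : u = x <;> by_cases h2 : v = x <;> simp [h1, h2]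
  set sf : Sym2 V → ℕ :=
    Sym2.lift ⟨fun u v => if u = x then k v else if v = x then k u else 2, hsymm⟩ with hsf
  set w' : Sym2 V → ℕ := fun e => if e ∈ T.image (fun j => s(x, j)) then sf e else w e with hw'
  set f' : V → ℕ := fun v => if v = x then a else if v ∈ T then 3 - f v else f v with hf'
  have himg : ∀ u v : V, (s(u, v) ∈ T.image (fun j => s(x, j)))
      ↔ ((u = x ∧ v ∈ T) ∨ (v = x ∧ u ∈ T)) := by
    intro u v
    constructor
    · intro hm
      obtain ⟨j, hj, hje⟩ := mem_image.1 hm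
      rw [Sym2.eq_iff] at hje
      rcases hje with ⟨h1, h2⟩ | ⟨h1, h2⟩
      · exact Or.inl ⟨h1.symm, h2 ▸ hj⟩
      · exact Or.inr ⟨h1.symm, h2 ▸ hj⟩
    · rintro (⟨h1, hv⟩ | ⟨h1, hu⟩)
      · rw [h1]
        exact mem_image_of_mem _ hv
      · rw [h1, Sym2.eq_swap]
        exact mem_image_of_mem _ hu
  -- untouched edges
  have hwnot : ∀ v u : V, (v ≠ x ∧ v ∉ T) ∨ (v ≠ x ∧ u ≠ x) → w' s(v, u) = w s(v, u) := by
    intro v u hc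
    have hnm : s(v, u) ∉ T.image (fun j => s(x, j)) := by
      rw [himg]
      rintro (⟨h1, h2⟩ | ⟨h1, h2⟩)
      · rcases hc with ⟨hvx, _⟩ | ⟨hvx, _⟩ <;> exact hvx h1
      · rcases hc with ⟨_, hvT⟩ | ⟨_, hux⟩
        · exact hvT h2
        · exact hux h1
    simp only [hw', if_neg hnm]
  -- toggled edges, seen from the old vertex
  have hwT : ∀ v ∈ T, w' s(v, x) = k v := by
    intro v hv
    have hvx : v ≠ x := fun hc => hxT (hc ▸ hv)
    have hm : s(v, x) ∈ T.image (fun j => s(x, j)) := (himg v x).2 (Or.inr ⟨rfl, hv⟩)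
    simp only [hw', if_pos hm, hsf, Sym2.lift_mk]
    simp [hvx]
  -- toggled edges, seen from x
  have hwxT : ∀ u ∈ T, w' s(x, u) = k u := by
    intro u hu
    have hm : s(x, u) ∈ T.image (fun j => s(x, j)) := (himg x u).2 (Or.inl ⟨rfl, hu⟩)
    simp only [hw', if_pos hm, hsf, Sym2.lift_mk]
    simp
  -- sums of old vertices are unchanged
  have hSA : ∀ v ∈ A, totS G f' w' v = totS G f w v := by
    intro v hv
    have hvx : v ≠ x := fun hc => hx (hc ▸ hv)
    by_cases hvT : v ∈ T
    · have hxv : x ∈ G.neighborFinset v := by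
        have h1 : v ∈ G.neighborFinset x := inter_subset_left (hTF hvT)
        rw [SimpleGraph.mem_neighborFinset] at h1 ⊢
        exact h1.symm
      have hsplit : ∀ (g : Sym2 V → ℕ),
          (∑ u ∈ G.neighborFinset v, g s(v, u))
            = g s(v, x) + ∑ u ∈ (G.neighborFinset v).erase x, g s(v, u) :=
        fun g => (Finset.add_sum_erase _ _ hxv).symm
      have hrest : ∀ u ∈ (G.neighborFinset v).erase x, w' s(v, u) = w s(v, u) := by
        intro u hu
        exact hwnot v u (Or.inr ⟨hvx, (mem_erase.1 hu).1⟩)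
      have hold : w s(v, x) = 2 := by
        rw [Sym2.eq_swap]; exact hout x v hx
      have hfv' : f' v = 3 - f v := by simp [hf', hvx, hvT]
      rw [totS, totS, hsplit w', hsplit w, hwT v hvT, hold, hfv',
        Finset.sum_congr rfl hrest]
      have hR := hf v hv
      generalize (∑ u ∈ (G.neighborFinset v).erase x, w s(v, u)) = R
      rcases hR with h1 | h1 <;> simp [hk, h1] <;> omega
    · have hfv' : f' v = f v := by simp [hf', hvx, hvT]
      rw [totS, totS, hfv', Finset.sum_congr rfl
        (fun u _ => hwnot v u (Or.inl ⟨hvx, hvT⟩))]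
  -- the sum at x
  have hSx : totS G f' w' x = a + 2 * ((G.neighborFinset x).card - F.card)
      + ((∑ u ∈ T, k u) + 2 * (F.card - T.card)) := by
    have hfx : f' x = a := by simp [hf']
    have hsum : (∑ u ∈ G.neighborFinset x \ T, w' s(x, u)) + (∑ u ∈ T, w' s(x, u))
        = ∑ u ∈ G.neighborFinset x, w' s(x, u) := Finset.sum_sdiff hTN
    have h2 : (∑ u ∈ G.neighborFinset x \ T, w' s(x, u))
        = 2 * (G.neighborFinset x \ T).card := by
      have hterm : ∀ u ∈ G.neighborFinset x \ T, w' s(x, u) = 2 := by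
        intro u hu
        have huT : u ∉ T := (mem_sdiff.1 hu).2
        have hux : u ≠ x := by
          intro hc; subst hc
          exact (G.notMem_neighborFinset_self u) (mem_sdiff.1 hu).1
        rw [Sym2.eq_swap, hwnot u x (Or.inl ⟨hux, huT⟩), Sym2.eq_swap]
        exact hout x u hx
      rw [Finset.sum_congr rfl hterm, Finset.sum_const, smul_eq_mul, mul_comm]
    have h3 : (∑ u ∈ T, w' s(x, u)) = ∑ u ∈ T, k u :=
      Finset.sum_congr rfl (fun u hu => hwxT u hu)
    have hc1 : (G.neighborFinset x \ T).card = (G.neighborFinset x).card - T.card :=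
      card_sdiff_of_subset hTN
    have hc2 : T.card ≤ F.card := card_le_card hTF
    have hc3 : F.card ≤ (G.neighborFinset x).card := card_le_card inter_subset_left
    have hc4 : T.card ≤ (G.neighborFinset x).card := card_le_card hTN
    rw [totS, hfx, ← hsum, h2, h3, hc1]
    set s := ∑ u ∈ T, k u
    omega
  refine ⟨f', w', ?_, ?_, ?_, ?_⟩
  · intro v hv
    rcases mem_insert.1 hv with rfl | hvA
    · simpa [hf'] using ha
    · have hvx : v ≠ x := fun hc => hx (hc ▸ hvA)
      by_cases hvT : v ∈ T
      · rcases hf v hvA with h1 | h1 <;> simp [hf', hvx, hvT, h1]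
      · simpa [hf', hvx, hvT] using hf v hvA
  · intro e
    by_cases hm : e ∈ T.image (fun j => s(x, j))
    · simp only [hw', if_pos hm]
      have hk13 : ∀ j, k j = 1 ∨ k j = 3 := fun j => by
        by_cases h1 : f j = 1 <;> simp [hk, h1]
      clear hm
      induction e using Sym2.ind with
      | _ u v =>
        rw [hsf, Sym2.lift_mk]
        dsimp only
        split_ifs with h1 h2
        · rcases hk13 v with h | h <;> simp [h]
        · rcases hk13 u with h | h <;> simp [h]
        · simp
    · simp only [hw', if_neg hm]
      exact hw e
  · intro u v hu
    have hux : u ≠ x := fun hc => hu (hc ▸ mem_insert_self x A)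
    have huA : u ∉ A := fun hc => hu (mem_insert_of_mem hc)
    have huT : u ∉ T := fun hc => huA (hTA hc)
    rw [hwnot u v (Or.inl ⟨hux, huT⟩)]
    exact hout u v huA
  · intro u hu v hv huv
    rcases mem_insert.1 hu with rfl | huA <;> rcases mem_insert.1 hv with rfl | hvA
    · exact absurd huv (G.irrefl)
    · have hvF : v ∈ F := mem_inter.2 ⟨(SimpleGraph.mem_neighborFinset _ _ _).2 huv, hvA⟩
      rw [hSx, hSA v hvA]
      intro hc
      exact ht (hc ▸ mem_image_of_mem _ hvF)
    · have huF : u ∈ F :=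
        mem_inter.2 ⟨(SimpleGraph.mem_neighborFinset _ _ _).2 huv.symm, huA⟩
      rw [hSx, hSA u huA]
      intro hc
      exact ht (hc.symm ▸ mem_image_of_mem _ huF)
    · rw [hSA u huA, hSA v hvA]
      exact hadj u huA v hvA huv

/-- Kalkowski's invariant can be realized on any finite set of vertices. -/
lemma kalkowski_all (G : SimpleGraph V) [DecidableRel G.Adj] (A : Finset V) :
    ∃ f w, GoodW G A f w := by
  classical
  induction A using Finset.induction_on with
  | empty =>
    exact ⟨fun _ => 1, fun _ => 2,
      fun v hv => absurd hv (notMem_empty v),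
      fun e => Or.inr (Or.inl rfl),
      fun u v _ => rfl,
      fun u hu => absurd hu (notMem_empty u)⟩
  | insert _ _ hx ih =>
    obtain ⟨f, w, hfw⟩ := ih
    exact kalkowski_step G _ _ hx f w hfw

end Kalkowski

/-- **Kalkowski's theorem**: every connected simple graph with at least three vertices
admits a total weighting with vertex weights in `{1,2}` and edge weights in `{1,2,3}`
such that adjacent vertices get distinct total sums. -/
theorem kalkowski_total_weighting {V : Type*} [Fintype V] [DecidableEq V]
    (G : SimpleGraph V) [DecidableRel G.Adj]
    (hconn : G.Connected) (hcard : 3 ≤ Fintype.card V) :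
    ∃ (fV : V → ℕ) (fE : Sym2 V → ℕ),
      (∀ v : V, fV v ∈ ({1, 2} : Set ℕ)) ∧
      (∀ e ∈ G.edgeSet, fE e ∈ ({1, 2, 3} : Set ℕ)) ∧
      ∀ u v : V, G.Adj u v →
        (fV u + ∑ w ∈ G.neighborFinset u, fE s(u, w)) ≠
        (fV v + ∑ w ∈ G.neighborFinset v, fE s(v, w)) := by
  obtain ⟨f, w, hf, hw, _, hadj⟩ := kalkowski_all G Finset.univ
  refine ⟨f, w, fun v => ?_, fun e _ => ?_, fun u v huv => ?_⟩
  · rcases hf v (mem_univ v) with h | h <;> simp [h]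
  · rcases hw e with h | h | h <;> simp [h]
  · exact hadj u (mem_univ u) v (mem_univ v) huv
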